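/- Any two finite n-ary trees have a minimal common expansion: there exists a common expansion S of T₁ and T₂ such that every common expansion S' of T₁ and T₂ is an expansion of S. -/

import Mathlib

/-- n-ary trees: a single vertex (leaf) is a tree, and attaching n trees as the
children of a new root yields a tree. -/
inductive NTree (n : ℕ) : Type
  | leaf : NTree n
  | node (f : Fin n → NTree n) : NTree n

/-- Simple expansion: replace one leaf by a node with n leaf children. -/
inductive SimpleExp {n : ℕ} : NTree n → NTree n → Prop
  | root : SimpleExp .leaf (.node fun _ => .leaf)
  | child {f g : Fin n → NTree n} (i : Fin n) :
      SimpleExp (f i) (g i) → (∀ j, j ≠ i → f j = g j) →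
      SimpleExp (.node f) (.node g)

/-- Expansion: the result of finitely many successive simple expansions. -/
def Expansion {n : ℕ} : NTree n → NTree n → Prop := Relation.ReflTransGen SimpleExp

namespace NTreeAux

/-- Structural order: `Le T S` iff `S` refines `T`. -/
inductive Le {n : ℕ} : NTree n → NTree n → Prop
  | leaf (T : NTree n) : Le .leaf T
  | node {f g : Fin n → NTree n} : (∀ i, Le (f i) (g i)) → Le (.node f) (.node g)

theorem Le.refl {n : ℕ} : ∀ T : NTree n, Le T T
  | .leaf => .leaf _
  | .node f => .node fun i => Le.refl (f i)

theorem Le.trans {n : ℕ} {A B C : NTree n} (h1 : Le A B) (h2 : Le B C) : Le A C := by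
  induction h1 generalizing C with
  | leaf => exact .leaf _
  | node h ih =>
    cases h2 with
    | node h2 => exact .node fun i => ih i (h2 i)

theorem simpleExp_le {n : ℕ} {A B : NTree n} (h : SimpleExp A B) : Le A B := by
  induction h with
  | root => exact .leaf _
  | @child f g i _ hj ih =>
    refine .node fun j => ?_
    by_cases hji : j = i
    · subst hji; exact ih
    · rw [hj j hji]; exact Le.refl _

theorem expansion_le {n : ℕ} {A B : NTree n} (h : Expansion A B) : Le A B := by
  induction h with
  | refl => exact Le.refl _
  | tail _ hs ih => exact ih.trans (simpleExp_le hs)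

theorem expansion_update {n : ℕ} {a b : NTree n} (f : Fin n → NTree n) (i : Fin n)
    (h : Expansion a b) :
    Expansion (.node (Function.update f i a)) (.node (Function.update f i b)) := by
  induction h with
  | refl => exact Relation.ReflTransGen.refl
  | @tail x y _ hs ih =>
    refine ih.tail (SimpleExp.child i ?_ ?_)
    · simpa using hs
    · intro j hj; simp [Function.update_of_ne hj]

theorem expansion_node_aux {n : ℕ} (s : Finset (Fin n)) :
    ∀ f g : Fin n → NTree n, (∀ i, Expansion (f i) (g i)) →
      (∀ i, i ∉ s → f i = g i) → Expansion (NTree.node f) (NTree.node g) := by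
  induction s using Finset.induction with
  | empty =>
    intro f g _ hout
    have : f = g := funext fun i => hout i (Finset.notMem_empty i)
    rw [this]
    exact Relation.ReflTransGen.refl
  | @insert i s hi ih =>
    intro f g hall hout
    have h1 : Expansion (NTree.node f) (NTree.node (Function.update f i (g i))) := by
      have := expansion_update f i (hall i)
      simpa using this
    refine h1.trans (ih _ _ ?_ ?_)
    · intro j
      by_cases hji : j = i
      · subst hji; simp; exact Relation.ReflTransGen.refl
      · simpa [Function.update_of_ne hji] using hall j
    · intro j hj
      by_cases hji : j = i
      · subst hji; simp
      · rw [Function.update_of_ne hji]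
        exact hout j (by simp [hji, hj])

theorem expansion_node {n : ℕ} {f g : Fin n → NTree n}
    (h : ∀ i, Expansion (f i) (g i)) : Expansion (NTree.node f) (NTree.node g) :=
  expansion_node_aux Finset.univ f g h (fun i hi => absurd (Finset.mem_univ i) hi)

theorem expansion_leaf {n : ℕ} : ∀ T : NTree n, Expansion .leaf T
  | .leaf => Relation.ReflTransGen.refl
  | .node f =>
    Relation.ReflTransGen.trans
      (Relation.ReflTransGen.single SimpleExp.root)
      (expansion_node fun i => expansion_leaf (f i))

theorem le_expansion {n : ℕ} {A B : NTree n} (h : Le A B) : Expansion A B := by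
  induction h with
  | leaf T => exact expansion_leaf T
  | node _ ih => exact expansion_node ih

/-- Pointwise join of two trees. -/
def join {n : ℕ} : NTree n → NTree n → NTree n
  | .leaf, t => t
  | .node f, .leaf => .node f
  | .node f, .node g => .node fun i => join (f i) (g i)

theorem le_join_left {n : ℕ} : ∀ A B : NTree n, Le A (join A B)
  | .leaf, _ => .leaf _
  | .node _, .leaf => Le.refl _
  | .node f, .node g => .node fun i => le_join_left (f i) (g i)

theorem le_join_right {n : ℕ} : ∀ A B : NTree n, Le B (join A B)
  | .leaf, B => Le.refl B
  | .node _, .leaf => .leaf _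
  | .node f, .node g => .node fun i => le_join_right (f i) (g i)

theorem join_le {n : ℕ} : ∀ {A B C : NTree n}, Le A C → Le B C → Le (join A B) C
  | .leaf, _, _, _, h2 => h2
  | .node _, .leaf, _, h1, _ => h1
  | .node f, .node g, .node h, .node h1, .node h2 =>
    .node fun i => join_le (h1 i) (h2 i)
  | .node _, .node _, .leaf, h1, _ => by cases h1

end NTreeAux

/-- any two finite n-ary trees have a minimal common expansion. -/
theorem stmt_6 {n : ℕ} (hn : 2 ≤ n) (T₁ T₂ : NTree n) :
    ∃ S : NTree n, Expansion T₁ S ∧ Expansion T₂ S ∧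
      ∀ S' : NTree n, Expansion T₁ S' → Expansion T₂ S' → Expansion S S' := by
  refine ⟨NTreeAux.join T₁ T₂, NTreeAux.le_expansion (NTreeAux.le_join_left T₁ T₂),
    NTreeAux.le_expansion (NTreeAux.le_join_right T₁ T₂), fun S' h1 h2 =>
    NTreeAux.le_expansion (NTreeAux.join_le (NTreeAux.expansion_le h1) (NTreeAux.expansion_le h2))⟩
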